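/- arXiv:1407.3943 — 2 statements merged into one kernel-verified Lean document; each statement's English description precedes it below -/
import Mathlib

section
/- Let Q be a symmetric positive semidefinite d×d real matrix, γ ∈ ℝ^d, and let ν be a measure on ℝ^d with ν({0}) = 0 and ∫ min(|x|²,1) ν(dx) < ∞. Define the Lévy–Khinchine exponent ψ(z) = −½⟨z,Qz⟩ + i⟨γ,z⟩ + ∫_{ℝ^d} (e^{i⟨z,x⟩} − 1 − i⟨z,x⟩ 1_{|x|≤1}(x)) ν(dx), z ∈ ℝ^d. Let c > 0 and assume the logarithmic moment condition ∫_{|x|>2} log|x| ν(dx) < ∞. Then for every z ∈ ℝ^d the function s ↦ ψ(e^{−cs} z) is Lebesgue integrable on [0,∞), i.e. ∫_0^∞ |ψ(e^{−cs} z)| ds < ∞. -/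
open MeasureTheory Filter Topology
open scoped RealInnerProductSpace

/-- The Lévy–Khinchine exponent associated with a generating triplet `(Q, ν, γ)` on `ℝ^d`:
`ψ(z) = −½⟨z,Qz⟩ + i⟨γ,z⟩ + ∫ (e^{i⟨z,x⟩} − 1 − i⟨z,x⟩ 1_{|x|≤1}(x)) ν(dx)`. -/
noncomputable def levyExponent {d : ℕ} (Q : Matrix (Fin d) (Fin d) ℝ)
    (γ : EuclideanSpace ℝ (Fin d)) (ν : Measure (EuclideanSpace ℝ (Fin d)))
    (z : EuclideanSpace ℝ (Fin d)) : ℂ :=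
  -(1 / 2 : ℂ) * ((∑ i, ∑ j, z i * Q i j * z j : ℝ) : ℂ)
    + Complex.I * ((⟪γ, z⟫ : ℝ) : ℂ)
    + ∫ x, (Complex.exp (Complex.I * ((⟪z, x⟫ : ℝ) : ℂ)) - 1
        - (if ‖x‖ ≤ 1 then Complex.I * ((⟪z, x⟫ : ℝ) : ℂ) else 0)) ∂ν

section Aux
open MeasureTheory Filter Topology Complex
open scoped ENNReal

lemma aux_exp1 (θ : ℝ) : ‖Complex.exp (Complex.I * θ) - 1 - Complex.I * θ‖ ≤ 3 * θ ^ 2 := by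
  have habs : ‖Complex.I * (θ:ℂ)‖ = |θ| := by
    simp [map_mul]
  rcases le_or_gt |θ| 1 with h | h
  · have := Complex.norm_exp_sub_one_sub_id_le (x := Complex.I * θ) (by rw [habs]; exact h)
    rw [habs] at this
    calc ‖Complex.exp (Complex.I * θ) - 1 - Complex.I * θ‖ ≤ |θ| ^ 2 := this
      _ = θ ^ 2 := _root_.sq_abs θ
      _ ≤ 3 * θ ^ 2 := by nlinarith [sq_nonneg θ]
  · have h1 : ‖Complex.exp (Complex.I * θ)‖ = 1 := by
      rw [mul_comm]; exact Complex.norm_exp_ofReal_mul_I θ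
    have h2 : ‖Complex.exp (Complex.I * θ) - 1 - Complex.I * θ‖ ≤ 1 + 1 + |θ| := by
      calc ‖Complex.exp (Complex.I * θ) - 1 - Complex.I * θ‖
          ≤ ‖Complex.exp (Complex.I * θ) - 1‖ + ‖Complex.I * (θ:ℂ)‖ := norm_sub_le _ _
        _ ≤ (‖Complex.exp (Complex.I * θ)‖ + ‖(1:ℂ)‖) + |θ| := by
            gcongr; · exact norm_sub_le _ _
            · rw [habs]
        _ = 1 + 1 + |θ| := by rw [h1, norm_one]
    nlinarith [_root_.sq_abs θ, abs_nonneg θ]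

lemma aux_exp2 (θ : ℝ) : ‖Complex.exp (Complex.I * θ) - 1‖ ≤ min 2 (2 * |θ|) := by
  have habs : ‖Complex.I * (θ:ℂ)‖ = |θ| := by simp [map_mul]
  have h1 : ‖Complex.exp (Complex.I * θ)‖ = 1 := by
    rw [mul_comm]; exact Complex.norm_exp_ofReal_mul_I θ
  rcases le_or_gt |θ| 1 with h | h
  · have := Complex.norm_exp_sub_one_le (x := Complex.I * θ) (by rw [habs]; exact h)
    rw [habs] at this
    refine le_min ?_ this
    calc ‖Complex.exp (Complex.I * θ) - 1‖ ≤ ‖Complex.exp (Complex.I * θ)‖ + ‖(1:ℂ)‖ :=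
        norm_sub_le _ _
      _ = 2 := by rw [h1, norm_one]; norm_num
  · have h2 : ‖Complex.exp (Complex.I * θ) - 1‖ ≤ 2 := by
      calc ‖Complex.exp (Complex.I * θ) - 1‖ ≤ ‖Complex.exp (Complex.I * θ)‖ + ‖(1:ℂ)‖ :=
          norm_sub_le _ _
        _ = 2 := by rw [h1, norm_one]; norm_num
    exact le_min h2 (h2.trans (by linarith))

open scoped RealInnerProductSpace

lemma aux_F_bound {E : Type*} [NormedAddCommGroup E] [InnerProductSpace ℝ E] (w x : E) :
    ‖Complex.exp (Complex.I * ((⟪w, x⟫ : ℝ) : ℂ)) - 1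
        - (if ‖x‖ ≤ 1 then Complex.I * ((⟪w, x⟫ : ℝ) : ℂ) else 0)‖
      ≤ 3 * ‖w‖ ^ 2 * min (‖x‖ ^ 2) 1
        + Set.indicator {y : E | 1 < ‖y‖} (fun y => min 2 (2 * ‖w‖ * ‖y‖)) x := by
  have hθ : |⟪w, x⟫| ≤ ‖w‖ * ‖x‖ := abs_real_inner_le_norm w x
  by_cases hx : ‖x‖ ≤ 1
  · rw [if_pos hx, Set.indicator_of_notMem (by simp [Set.mem_setOf_eq, not_lt, hx])]
    rw [add_zero]
    calc ‖Complex.exp (Complex.I * ((⟪w, x⟫ : ℝ) : ℂ)) - 1 - Complex.I * ((⟪w, x⟫ : ℝ) : ℂ)‖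
        ≤ 3 * ⟪w, x⟫ ^ 2 := aux_exp1 _
      _ ≤ 3 * (‖w‖ * ‖x‖) ^ 2 := by
          nlinarith [abs_nonneg ⟪w, x⟫, _root_.sq_abs ⟪w, x⟫, mul_self_nonneg (‖w‖ * ‖x‖ - |⟪w, x⟫|)]
      _ = 3 * ‖w‖ ^ 2 * ‖x‖ ^ 2 := by ring
      _ = 3 * ‖w‖ ^ 2 * min (‖x‖ ^ 2) 1 := by
          rw [min_eq_left (by nlinarith [norm_nonneg x])]
  · rw [if_neg hx]
    push_neg at hx
    rw [Set.indicator_of_mem (by simpa [Set.mem_setOf_eq] using hx)]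
    rw [sub_zero]
    calc ‖Complex.exp (Complex.I * ((⟪w, x⟫ : ℝ) : ℂ)) - 1‖
        ≤ min 2 (2 * |⟪w, x⟫|) := aux_exp2 _
      _ ≤ min 2 (2 * ‖w‖ * ‖x‖) := by
          refine min_le_min le_rfl ?_
          rw [mul_assoc]; exact mul_le_mul_of_nonneg_left hθ (by norm_num)
      _ ≤ 3 * ‖w‖ ^ 2 * min (‖x‖ ^ 2) 1 + min 2 (2 * ‖w‖ * ‖x‖) := by
          have : 0 ≤ 3 * ‖w‖ ^ 2 * min (‖x‖ ^ 2) 1 := by positivity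
          linarith

lemma aux_calculus {c : ℝ} (hc : 0 < c) {a : ℝ} (ha : 0 ≤ a) :
    ∫⁻ s in Set.Ici (0:ℝ), ENNReal.ofReal (min 2 (a * Real.exp (-c * s)))
      ≤ ENNReal.ofReal ((2 * max 0 (Real.log a) + 1) / c) := by
  set t₀ : ℝ := max 0 (Real.log a) / c with ht₀def
  have ht₀ : 0 ≤ t₀ := div_nonneg (le_max_left _ _) hc.le
  have hsub : Set.Ici (0:ℝ) ⊆ Set.Icc 0 t₀ ∪ Set.Ioi t₀ := by
    intro s hs
    rcases le_or_gt s t₀ with h | h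
    · exact Or.inl ⟨hs, h⟩
    · exact Or.inr h
  have hIcc : ∫⁻ s in Set.Icc (0:ℝ) t₀, ENNReal.ofReal (min 2 (a * Real.exp (-c * s)))
      ≤ ENNReal.ofReal 2 * ENNReal.ofReal t₀ := by
    calc ∫⁻ s in Set.Icc (0:ℝ) t₀, ENNReal.ofReal (min 2 (a * Real.exp (-c * s)))
        ≤ ∫⁻ _ in Set.Icc (0:ℝ) t₀, ENNReal.ofReal 2 :=
          lintegral_mono fun s => ENNReal.ofReal_le_ofReal (min_le_left _ _)
      _ = ENNReal.ofReal 2 * volume (Set.Icc (0:ℝ) t₀) := setLIntegral_const _ _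
      _ = ENNReal.ofReal 2 * ENNReal.ofReal t₀ := by rw [Real.volume_Icc, sub_zero]
  have hint : IntegrableOn (fun s : ℝ => a * Real.exp (-c * s)) (Set.Ioi t₀) :=
    (exp_neg_integrableOn_Ioi t₀ hc).const_mul a
  have hval : ∫ s in Set.Ioi t₀, a * Real.exp (-c * s) = a * (c⁻¹ * Real.exp (-(c * t₀))) := by
    rw [MeasureTheory.integral_const_mul]
    congr 1
    have h2 := integral_comp_mul_left_Ioi (fun x => Real.exp (-x)) t₀ hc
    simp only [smul_eq_mul] at h2
    rw [show (fun s : ℝ => Real.exp (-c * s)) = fun s : ℝ => Real.exp (-(c * s)) by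
      funext s; ring_nf]
    rw [h2, integral_exp_neg_Ioi]
  have hct : c * t₀ = max 0 (Real.log a) := by
    rw [ht₀def]; field_simp
  have key : a * Real.exp (-(c * t₀)) ≤ 1 := by
    rw [hct]
    rcases le_or_gt a 1 with h | h
    · have h1 : Real.exp (-max 0 (Real.log a)) ≤ 1 := by
        rw [Real.exp_le_one_iff]
        simp [le_max_left]
      calc a * Real.exp (-max 0 (Real.log a)) ≤ 1 * 1 :=
          mul_le_mul h h1 (Real.exp_nonneg _) zero_le_one
        _ = 1 := one_mul 1
    · rw [max_eq_right (Real.log_nonneg h.le), Real.exp_neg, Real.exp_log (by linarith)]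
      rw [mul_inv_cancel₀ (by linarith)]
  have key2 : a * (c⁻¹ * Real.exp (-(c * t₀))) ≤ 1 / c := by
    calc a * (c⁻¹ * Real.exp (-(c * t₀))) = a * Real.exp (-(c * t₀)) * c⁻¹ := by ring
      _ ≤ 1 * c⁻¹ := mul_le_mul_of_nonneg_right key (inv_nonneg.mpr hc.le)
      _ = 1 / c := by ring
  have hIoi : ∫⁻ s in Set.Ioi t₀, ENNReal.ofReal (min 2 (a * Real.exp (-c * s)))
      ≤ ENNReal.ofReal (1 / c) := by
    calc ∫⁻ s in Set.Ioi t₀, ENNReal.ofReal (min 2 (a * Real.exp (-c * s)))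
        ≤ ∫⁻ s in Set.Ioi t₀, ENNReal.ofReal (a * Real.exp (-c * s)) :=
          lintegral_mono fun s => ENNReal.ofReal_le_ofReal (min_le_right _ _)
      _ = ENNReal.ofReal (∫ s in Set.Ioi t₀, a * Real.exp (-c * s)) :=
          (ofReal_integral_eq_lintegral_ofReal hint
            (Filter.Eventually.of_forall fun s => by positivity)).symm
      _ ≤ ENNReal.ofReal (1 / c) := ENNReal.ofReal_le_ofReal (hval ▸ key2)
  calc ∫⁻ s in Set.Ici (0:ℝ), ENNReal.ofReal (min 2 (a * Real.exp (-c * s)))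
      ≤ ∫⁻ s in Set.Icc (0:ℝ) t₀ ∪ Set.Ioi t₀,
          ENNReal.ofReal (min 2 (a * Real.exp (-c * s))) := lintegral_mono_set hsub
    _ ≤ (∫⁻ s in Set.Icc (0:ℝ) t₀, ENNReal.ofReal (min 2 (a * Real.exp (-c * s))))
        + ∫⁻ s in Set.Ioi t₀, ENNReal.ofReal (min 2 (a * Real.exp (-c * s))) :=
        lintegral_union_le _ _ _
    _ ≤ ENNReal.ofReal 2 * ENNReal.ofReal t₀ + ENNReal.ofReal (1 / c) := add_le_add hIcc hIoi
    _ = ENNReal.ofReal (2 * t₀ + 1 / c) := by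
        rw [← ENNReal.ofReal_mul (by norm_num), ENNReal.ofReal_add (by positivity) (by positivity)]
    _ = ENNReal.ofReal ((2 * max 0 (Real.log a) + 1) / c) := by
        congr 1
        rw [ht₀def]
        field_simp

lemma aux_nu {d : ℕ} (ν : Measure (EuclideanSpace ℝ (Fin d)))
    (hν2 : ∫⁻ x, ENNReal.ofReal (min (‖x‖ ^ 2) 1) ∂ν < ⊤)
    (hνlog : ∫⁻ x in {x : EuclideanSpace ℝ (Fin d) | 2 < ‖x‖},
      ENNReal.ofReal (Real.log ‖x‖) ∂ν < ⊤)
    {c : ℝ} (hc : 0 < c) (b : ℝ) (hb : 0 ≤ b) :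
    ∫⁻ x in {x : EuclideanSpace ℝ (Fin d) | 1 < ‖x‖},
      ENNReal.ofReal ((2 * (b + Real.log ‖x‖) + 1) / c) ∂ν < ⊤ := by
  set S1 : Set (EuclideanSpace ℝ (Fin d)) := {x | 1 < ‖x‖} with hS1def
  have hS1meas : MeasurableSet S1 :=
    (isOpen_lt continuous_const continuous_norm).measurableSet
  have hνS1 : ν S1 < ⊤ := by
    have h1 : ν S1 = ∫⁻ _ in S1, 1 ∂ν := by rw [setLIntegral_one]
    rw [h1]
    calc ∫⁻ _ in S1, (1:ℝ≥0∞) ∂ν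
        ≤ ∫⁻ x in S1, ENNReal.ofReal (min (‖x‖ ^ 2) 1) ∂ν := by
          refine setLIntegral_mono' hS1meas fun x hx => ?_
          have : min (‖x‖ ^ 2) 1 = 1 := min_eq_right (by nlinarith [hx.out])
          rw [this]; simp
      _ ≤ ∫⁻ x, ENNReal.ofReal (min (‖x‖ ^ 2) 1) ∂ν := setLIntegral_le_lintegral _ _
      _ < ⊤ := hν2
  have hlogint : ∫⁻ x in S1, ENNReal.ofReal (Real.log ‖x‖) ∂ν < ⊤ := by
    have hsub : S1 ⊆ (S1 ∩ {x | ‖x‖ ≤ 2}) ∪ {x : EuclideanSpace ℝ (Fin d) | 2 < ‖x‖} := by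
      intro x hx
      rcases le_or_gt ‖x‖ 2 with h | h
      · exact Or.inl ⟨hx, h⟩
      · exact Or.inr h
    calc ∫⁻ x in S1, ENNReal.ofReal (Real.log ‖x‖) ∂ν
        ≤ ∫⁻ x in (S1 ∩ {x | ‖x‖ ≤ 2}) ∪ {x : EuclideanSpace ℝ (Fin d) | 2 < ‖x‖},
            ENNReal.ofReal (Real.log ‖x‖) ∂ν := lintegral_mono_set hsub
      _ ≤ (∫⁻ x in S1 ∩ {x | ‖x‖ ≤ 2}, ENNReal.ofReal (Real.log ‖x‖) ∂ν)
          + ∫⁻ x in {x : EuclideanSpace ℝ (Fin d) | 2 < ‖x‖},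
            ENNReal.ofReal (Real.log ‖x‖) ∂ν := lintegral_union_le _ _ _
      _ < ⊤ := by
          apply ENNReal.add_lt_top.mpr
          constructor
          · have hmeas2 : MeasurableSet (S1 ∩ {x : EuclideanSpace ℝ (Fin d) | ‖x‖ ≤ 2}) :=
              hS1meas.inter (isClosed_le continuous_norm continuous_const).measurableSet
            calc ∫⁻ x in S1 ∩ {x | ‖x‖ ≤ 2}, ENNReal.ofReal (Real.log ‖x‖) ∂ν
                ≤ ∫⁻ _ in S1 ∩ {x | ‖x‖ ≤ 2}, ENNReal.ofReal (Real.log 2) ∂ν := by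
                  refine setLIntegral_mono' hmeas2 fun x hx => ?_
                  exact ENNReal.ofReal_le_ofReal
                    (Real.log_le_log (by linarith [hx.1.out]) hx.2)
              _ = ENNReal.ofReal (Real.log 2) * ν (S1 ∩ {x | ‖x‖ ≤ 2}) := setLIntegral_const _ _
              _ ≤ ENNReal.ofReal (Real.log 2) * ν S1 := by
                  gcongr
                  exact Set.inter_subset_left
              _ < ⊤ := ENNReal.mul_lt_top ENNReal.ofReal_lt_top hνS1
          · exact hνlog
  calc ∫⁻ x in S1, ENNReal.ofReal ((2 * (b + Real.log ‖x‖) + 1) / c) ∂ν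
      ≤ ∫⁻ x in S1, (ENNReal.ofReal ((2 * b + 1) / c)
          + ENNReal.ofReal (2 / c) * ENNReal.ofReal (Real.log ‖x‖)) ∂ν := by
        refine setLIntegral_mono' hS1meas fun x hx => ?_
        have hlog : 0 ≤ Real.log ‖x‖ := Real.log_nonneg (by linarith [hx.out])
        rw [← ENNReal.ofReal_mul (by positivity),
          ← ENNReal.ofReal_add (by positivity) (by positivity)]
        apply ENNReal.ofReal_le_ofReal
        have heq : (2 * (b + Real.log ‖x‖) + 1) / c
            = (2 * b + 1) / c + (2 / c) * Real.log ‖x‖ := by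
          field_simp; ring
        rw [heq]
    _ = ENNReal.ofReal ((2 * b + 1) / c) * ν S1
        + ENNReal.ofReal (2 / c) * ∫⁻ x in S1, ENNReal.ofReal (Real.log ‖x‖) ∂ν := by
        rw [lintegral_add_left measurable_const, setLIntegral_const,
          lintegral_const_mul _ (measurable_norm.log.ennreal_ofReal)]
    _ < ⊤ := ENNReal.add_lt_top.mpr
        ⟨ENNReal.mul_lt_top ENNReal.ofReal_lt_top hνS1,
         ENNReal.mul_lt_top ENNReal.ofReal_lt_top hlogint⟩

lemma aux_nuS1 {d : ℕ} (ν : Measure (EuclideanSpace ℝ (Fin d)))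
    (hν2 : ∫⁻ x, ENNReal.ofReal (min (‖x‖ ^ 2) 1) ∂ν < ⊤) :
    ν {x : EuclideanSpace ℝ (Fin d) | 1 < ‖x‖} < ⊤ := by
  have hS1meas : MeasurableSet {x : EuclideanSpace ℝ (Fin d) | 1 < ‖x‖} :=
    (isOpen_lt continuous_const continuous_norm).measurableSet
  have h1 : ν {x : EuclideanSpace ℝ (Fin d) | 1 < ‖x‖}
      = ∫⁻ _ in {x : EuclideanSpace ℝ (Fin d) | 1 < ‖x‖}, 1 ∂ν := by rw [setLIntegral_one]
  rw [h1]
  calc ∫⁻ _ in {x : EuclideanSpace ℝ (Fin d) | 1 < ‖x‖}, (1 : ENNReal) ∂ν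
      ≤ ∫⁻ x in {x : EuclideanSpace ℝ (Fin d) | 1 < ‖x‖},
          ENNReal.ofReal (min (‖x‖ ^ 2) 1) ∂ν := by
        refine setLIntegral_mono' hS1meas fun x hx => ?_
        have : min (‖x‖ ^ 2) 1 = 1 := min_eq_right (by nlinarith [hx.out])
        rw [this]; simp
    _ ≤ ∫⁻ x, ENNReal.ofReal (min (‖x‖ ^ 2) 1) ∂ν := setLIntegral_le_lintegral _ _
    _ < ⊤ := hν2

lemma aux_log {t u : ℝ} (ht : 0 ≤ t) (hu : 1 < u) :
    max 0 (Real.log (t * u)) ≤ max 0 (Real.log t) + Real.log u := by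
  have hlogu : 0 ≤ Real.log u := Real.log_nonneg hu.le
  rcases eq_or_lt_of_le ht with h | h
  · rw [← h, zero_mul, Real.log_zero]
    simp only [max_self]
    positivity
  · rw [Real.log_mul (ne_of_gt h) (by linarith)]
    apply max_le (by positivity)
    exact add_le_add (le_max_right _ _) le_rfl


noncomputable def auxF {E : Type*} [NormedAddCommGroup E] [InnerProductSpace ℝ E]
    (w x : E) : ℂ :=
  Complex.exp (Complex.I * ((⟪w, x⟫ : ℝ) : ℂ)) - 1
    - (if ‖x‖ ≤ 1 then Complex.I * ((⟪w, x⟫ : ℝ) : ℂ) else 0)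

lemma auxF_norm_bound {E : Type*} [NormedAddCommGroup E] [InnerProductSpace ℝ E] (w x : E) :
    ‖auxF w x‖ ≤ 3 * ‖w‖ ^ 2 * min (‖x‖ ^ 2) 1
        + Set.indicator {y : E | 1 < ‖y‖} (fun y => min 2 (2 * ‖w‖ * ‖y‖)) x :=
  aux_F_bound w x

lemma auxF_meas {d : ℕ} (ν : Measure (EuclideanSpace ℝ (Fin d)))
    (w : EuclideanSpace ℝ (Fin d)) :
    AEStronglyMeasurable (fun x => auxF w x) ν := by
  unfold auxF
  apply Measurable.aestronglyMeasurable
  have h1 : Measurable fun x : EuclideanSpace ℝ (Fin d) =>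
      Complex.I * ((⟪w, x⟫ : ℝ) : ℂ) := by
    apply Measurable.const_mul
    exact Complex.measurable_ofReal.comp ((continuous_const.inner continuous_id).measurable)
  exact ((Complex.measurable_exp.comp h1).sub measurable_const).sub
    (Measurable.ite (isClosed_le continuous_norm continuous_const).measurableSet h1
      measurable_const)

lemma auxF_cont {E : Type*} [NormedAddCommGroup E] [InnerProductSpace ℝ E]
    (z x : E) (c : ℝ) :
    Continuous fun s : ℝ => auxF (Real.exp (-c * s) • z) x := by
  unfold auxF
  have h1 : Continuous fun s : ℝ => Complex.I * ((⟪Real.exp (-c * s) • z, x⟫ : ℝ) : ℂ) := by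
    simp only [real_inner_smul_left]
    exact continuous_const.mul (Complex.continuous_ofReal.comp
      ((Real.continuous_exp.comp (continuous_const.mul continuous_id)).mul continuous_const))
  apply Continuous.sub
  · exact (Complex.continuous_exp.comp h1).sub continuous_const
  · by_cases hx : ‖x‖ ≤ 1
    · simpa [hx] using h1
    · simp [hx]
      exact continuous_const

lemma aux_min_meas {d : ℕ} :
    Measurable fun x : EuclideanSpace ℝ (Fin d) => ENNReal.ofReal (min (‖x‖ ^ 2) 1) :=
  (((continuous_norm.pow 2).min continuous_const).measurable).ennreal_ofReal

lemma auxPhi_cont {d : ℕ} (ν : Measure (EuclideanSpace ℝ (Fin d)))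
    (hν2 : ∫⁻ x, ENNReal.ofReal (min (‖x‖ ^ 2) 1) ∂ν < ⊤)
    (z : EuclideanSpace ℝ (Fin d)) {c : ℝ} (hc : 0 < c) :
    Continuous fun s : ℝ => ∫ x, auxF (Real.exp (-c * s) • z) x ∂ν := by
  rw [continuous_iff_continuousAt]
  intro s₀
  set R : ℝ := Real.exp (-c * (s₀ - 1)) with hRdef
  have hR0 : 0 < R := Real.exp_pos _
  apply continuousAt_of_dominated (bound := fun x => (3 * (R * ‖z‖) ^ 2 + 2) * min (‖x‖ ^ 2) 1)
  · exact Eventually.of_forall fun s => auxF_meas ν _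
  · filter_upwards [Ioi_mem_nhds (show s₀ - 1 < s₀ by linarith)] with s hs
    refine Eventually.of_forall fun x => ?_
    have hb := auxF_norm_bound (Real.exp (-c * s) • z) x
    have hwn : ‖Real.exp (-c * s) • z‖ = Real.exp (-c * s) * ‖z‖ := by
      rw [norm_smul, Real.norm_eq_abs, abs_of_pos (Real.exp_pos _)]
    have hRle : ‖Real.exp (-c * s) • z‖ ≤ R * ‖z‖ := by
      rw [hwn]
      apply mul_le_mul_of_nonneg_right _ (norm_nonneg z)
      exact Real.exp_le_exp.mpr (by nlinarith [hs.out])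
    have hmin0 : (0:ℝ) ≤ min (‖x‖ ^ 2) 1 := le_min (by positivity) zero_le_one
    have h1 : 3 * ‖Real.exp (-c * s) • z‖ ^ 2 * min (‖x‖ ^ 2) 1
        ≤ 3 * (R * ‖z‖) ^ 2 * min (‖x‖ ^ 2) 1 := by
      apply mul_le_mul_of_nonneg_right _ hmin0
      nlinarith [norm_nonneg (Real.exp (-c * s) • z)]
    have h2 : Set.indicator {y : EuclideanSpace ℝ (Fin d) | 1 < ‖y‖}
        (fun y => min 2 (2 * ‖Real.exp (-c * s) • z‖ * ‖y‖)) x ≤ 2 * min (‖x‖ ^ 2) 1 := by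
      by_cases hx : x ∈ {y : EuclideanSpace ℝ (Fin d) | 1 < ‖y‖}
      · rw [Set.indicator_of_mem hx]
        have hm1 : min (‖x‖ ^ 2) 1 = 1 := min_eq_right (by nlinarith [hx.out])
        rw [hm1, mul_one]
        exact min_le_left _ _
      · rw [Set.indicator_of_notMem hx]
        positivity
    calc ‖auxF (Real.exp (-c * s) • z) x‖
        ≤ 3 * ‖Real.exp (-c * s) • z‖ ^ 2 * min (‖x‖ ^ 2) 1
          + Set.indicator {y : EuclideanSpace ℝ (Fin d) | 1 < ‖y‖}
            (fun y => min 2 (2 * ‖Real.exp (-c * s) • z‖ * ‖y‖)) x := hb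
      _ ≤ 3 * (R * ‖z‖) ^ 2 * min (‖x‖ ^ 2) 1 + 2 * min (‖x‖ ^ 2) 1 := add_le_add h1 h2
      _ = (3 * (R * ‖z‖) ^ 2 + 2) * min (‖x‖ ^ 2) 1 := by ring
  · constructor
    · exact (continuous_const.mul
        ((continuous_norm.pow 2).min continuous_const)).aestronglyMeasurable
    · rw [hasFiniteIntegral_iff_ofReal (Eventually.of_forall fun x => by positivity)]
      have heq : ∀ x : EuclideanSpace ℝ (Fin d),
          ENNReal.ofReal ((3 * (R * ‖z‖) ^ 2 + 2) * min (‖x‖ ^ 2) 1)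
            = ENNReal.ofReal (3 * (R * ‖z‖) ^ 2 + 2) * ENNReal.ofReal (min (‖x‖ ^ 2) 1) :=
        fun x => ENNReal.ofReal_mul (by positivity)
      simp_rw [heq]
      rw [lintegral_const_mul _ aux_min_meas]
      exact ENNReal.mul_lt_top ENNReal.ofReal_lt_top hν2
  · exact Eventually.of_forall fun x => (auxF_cont z x c).continuousAt

lemma aux_rw {d : ℕ} (Q : Matrix (Fin d) (Fin d) ℝ) (γ : EuclideanSpace ℝ (Fin d))
    (ν : Measure (EuclideanSpace ℝ (Fin d))) (z : EuclideanSpace ℝ (Fin d)) (t : ℝ) :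
    levyExponent Q γ ν (t • z)
      = -(1 / 2 : ℂ) * ((t ^ 2 * ∑ i, ∑ j, z i * Q i j * z j : ℝ) : ℂ)
        + Complex.I * ((t * ⟪γ, z⟫ : ℝ) : ℂ)
        + ∫ x, auxF (t • z) x ∂ν := by
  have hsum : (∑ i, ∑ j, (t • z) i * Q i j * (t • z) j)
      = t ^ 2 * ∑ i, ∑ j, z i * Q i j * z j := by
    rw [Finset.mul_sum]
    refine Finset.sum_congr rfl fun i _ => ?_
    rw [Finset.mul_sum]
    refine Finset.sum_congr rfl fun j _ => ?_
    simp only [PiLp.smul_apply, smul_eq_mul]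
    ring
  unfold levyExponent auxF
  rw [hsum, real_inner_smul_right]

set_option maxHeartbeats 1000000 in
private theorem main_thm {d : ℕ}
    (Q : Matrix (Fin d) (Fin d) ℝ) (hQsymm : Q.IsSymm) (hQpos : Q.PosSemidef)
    (γ : EuclideanSpace ℝ (Fin d))
    (ν : Measure (EuclideanSpace ℝ (Fin d)))
    (hν0 : ν {0} = 0)
    (hν2 : ∫⁻ x, ENNReal.ofReal (min (‖x‖ ^ 2) 1) ∂ν < ⊤)
    (hνlog : ∫⁻ x in {x : EuclideanSpace ℝ (Fin d) | 2 < ‖x‖},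
      ENNReal.ofReal (Real.log ‖x‖) ∂ν < ⊤)
    (c : ℝ) (hc : 0 < c) (z : EuclideanSpace ℝ (Fin d)) :
    IntegrableOn (fun s : ℝ => levyExponent Q γ ν (Real.exp (-c * s) • z))
      (Set.Ici 0) := by
  classical
  set S1 : Set (EuclideanSpace ℝ (Fin d)) := {x | 1 < ‖x‖} with hS1def
  have hS1meas : MeasurableSet S1 :=
    (isOpen_lt continuous_const continuous_norm).measurableSet
  have hνS1 : ν S1 < ⊤ := aux_nuS1 ν hν2
  set M₂ : ℝ≥0∞ := ∫⁻ x, ENNReal.ofReal (min (‖x‖ ^ 2) 1) ∂ν with hM₂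
  set Sz : ℝ := ∑ i, ∑ j, z i * Q i j * z j with hSz
  set K12 : ℝ := |Sz| / 2 + |⟪γ, z⟫| with hK12
  set A : ℝ≥0∞ := ENNReal.ofReal K12 + ENNReal.ofReal (3 * ‖z‖ ^ 2) * M₂ with hA
  set H : ℝ → ℝ≥0∞ := fun s =>
    ∫⁻ x in S1, ENNReal.ofReal (min 2 (2 * ‖z‖ * ‖x‖ * Real.exp (-c * s))) ∂ν with hH
  -- continuity of the function
  have hwn : ∀ s : ℝ, ‖Real.exp (-c * s) • z‖ = Real.exp (-c * s) * ‖z‖ := fun s => by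
    rw [norm_smul, Real.norm_eq_abs, abs_of_pos (Real.exp_pos _)]
  have hcont : Continuous fun s : ℝ => levyExponent Q γ ν (Real.exp (-c * s) • z) := by
    have hfeq : (fun s : ℝ => levyExponent Q γ ν (Real.exp (-c * s) • z))
        = fun s : ℝ => -(1 / 2 : ℂ) * ((Real.exp (-c * s) ^ 2 * Sz : ℝ) : ℂ)
          + Complex.I * ((Real.exp (-c * s) * ⟪γ, z⟫ : ℝ) : ℂ)
          + ∫ x, auxF (Real.exp (-c * s) • z) x ∂ν := funext fun s => aux_rw Q γ ν z _
    rw [hfeq]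
    have hexp : Continuous fun s : ℝ => Real.exp (-c * s) :=
      Real.continuous_exp.comp (continuous_const.mul continuous_id)
    refine Continuous.add (Continuous.add ?_ ?_) (auxPhi_cont ν hν2 z hc)
    · exact continuous_const.mul (Complex.continuous_ofReal.comp
        ((hexp.pow 2).mul continuous_const))
    · exact continuous_const.mul (Complex.continuous_ofReal.comp
        (hexp.mul continuous_const))
  refine ⟨hcont.aestronglyMeasurable.restrict, ?_⟩
  -- pointwise bound
  have hpt : ∀ s ∈ Set.Ici (0 : ℝ),
      ENNReal.ofReal ‖levyExponent Q γ ν (Real.exp (-c * s) • z)‖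
        ≤ A * ENNReal.ofReal (Real.exp (-c * s)) + H s := by
    intro s hs
    have e0 : (0 : ℝ) < Real.exp (-c * s) := Real.exp_pos _
    have hr1 : Real.exp (-c * s) ≤ 1 := by
      rw [Real.exp_le_one_iff]
      have := hs.out
      nlinarith
    rw [aux_rw Q γ ν z, ← hSz]
    set e : ℝ := Real.exp (-c * s) with he
    set T1 : ℂ := -(1 / 2 : ℂ) * ((e ^ 2 * Sz : ℝ) : ℂ) with hT1
    set T2 : ℂ := Complex.I * ((e * ⟪γ, z⟫ : ℝ) : ℂ) with hT2
    set T3 : ℂ := ∫ x, auxF (e • z) x ∂ν with hT3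
    have hnT1 : ‖T1‖ ≤ |Sz| / 2 * e := by
      rw [hT1, show -(1 / 2 : ℂ) * ((e ^ 2 * Sz : ℝ) : ℂ)
          = (((-(1 / 2) * (e ^ 2 * Sz)) : ℝ) : ℂ) by push_cast; ring,
        Complex.norm_real, Real.norm_eq_abs, abs_mul, abs_mul, abs_neg,
        _root_.abs_of_nonneg (by norm_num : (0:ℝ) ≤ 1/2),
        _root_.abs_of_nonneg (by positivity : (0:ℝ) ≤ e ^ 2)]
      nlinarith [abs_nonneg Sz,
        mul_nonneg (mul_nonneg e0.le (sub_nonneg.mpr hr1)) (abs_nonneg Sz)]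
    have hnT2 : ‖T2‖ ≤ |⟪γ, z⟫| * e := by
      rw [hT2, norm_mul, Complex.norm_I, one_mul, Complex.norm_real, Real.norm_eq_abs,
        abs_mul, _root_.abs_of_pos e0]
      exact le_of_eq (mul_comm _ _)
    have h12 : ‖T1 + T2‖ ≤ K12 * e := by
      calc ‖T1 + T2‖ ≤ ‖T1‖ + ‖T2‖ := norm_add_le _ _
        _ ≤ |Sz| / 2 * e + |⟪γ, z⟫| * e := add_le_add hnT1 hnT2
        _ = K12 * e := by rw [hK12]; ring
    have step3 : ENNReal.ofReal ‖T3‖ ≤ ∫⁻ x, ENNReal.ofReal ‖auxF (e • z) x‖ ∂ν := by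
      rw [hT3]
      calc ENNReal.ofReal ‖∫ x, auxF (e • z) x ∂ν‖
          = (‖∫ x, auxF (e • z) x ∂ν‖₊ : ℝ≥0∞) := ofReal_norm _
        _ ≤ ∫⁻ x, (‖auxF (e • z) x‖₊ : ℝ≥0∞) ∂ν := enorm_integral_le_lintegral_enorm _
        _ = ∫⁻ x, ENNReal.ofReal ‖auxF (e • z) x‖ ∂ν := by
            simp_rw [ofReal_norm, enorm_eq_nnnorm]
    have hptw : ∀ x : EuclideanSpace ℝ (Fin d),
        ENNReal.ofReal ‖auxF (e • z) x‖
          ≤ ENNReal.ofReal (3 * (e * ‖z‖) ^ 2) * ENNReal.ofReal (min (‖x‖ ^ 2) 1)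
            + S1.indicator (fun y => ENNReal.ofReal (min 2 (2 * ‖z‖ * ‖y‖ * e))) x := by
      intro x
      have hb := auxF_norm_bound (e • z) x
      rw [hwn s, ← he] at hb
      calc ENNReal.ofReal ‖auxF (e • z) x‖
          ≤ ENNReal.ofReal (3 * (e * ‖z‖) ^ 2 * min (‖x‖ ^ 2) 1
              + Set.indicator {y : EuclideanSpace ℝ (Fin d) | 1 < ‖y‖}
                (fun y => min 2 (2 * (e * ‖z‖) * ‖y‖)) x) := ENNReal.ofReal_le_ofReal hb
        _ ≤ ENNReal.ofReal (3 * (e * ‖z‖) ^ 2 * min (‖x‖ ^ 2) 1)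
            + ENNReal.ofReal (Set.indicator {y : EuclideanSpace ℝ (Fin d) | 1 < ‖y‖}
                (fun y => min 2 (2 * (e * ‖z‖) * ‖y‖)) x) := ENNReal.ofReal_add_le
        _ = ENNReal.ofReal (3 * (e * ‖z‖) ^ 2) * ENNReal.ofReal (min (‖x‖ ^ 2) 1)
            + S1.indicator (fun y => ENNReal.ofReal (min 2 (2 * ‖z‖ * ‖y‖ * e))) x := by
            rw [ENNReal.ofReal_mul (by positivity)]
            congr 1
            by_cases hx : x ∈ S1
            · rw [Set.indicator_of_mem hx, Set.indicator_of_mem hx]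
              congr 1
              ring
            · rw [Set.indicator_of_notMem hx, Set.indicator_of_notMem hx,
                ENNReal.ofReal_zero]
    have step4 : ∫⁻ x, ENNReal.ofReal ‖auxF (e • z) x‖ ∂ν
        ≤ ENNReal.ofReal (3 * (e * ‖z‖) ^ 2) * M₂ + H s := by
      calc ∫⁻ x, ENNReal.ofReal ‖auxF (e • z) x‖ ∂ν
          ≤ ∫⁻ x, (ENNReal.ofReal (3 * (e * ‖z‖) ^ 2) * ENNReal.ofReal (min (‖x‖ ^ 2) 1)
              + S1.indicator (fun y => ENNReal.ofReal (min 2 (2 * ‖z‖ * ‖y‖ * e))) x) ∂ν :=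
            lintegral_mono hptw
        _ = ENNReal.ofReal (3 * (e * ‖z‖) ^ 2) * M₂ + H s := by
            rw [lintegral_add_left (aux_min_meas.const_mul _),
              lintegral_const_mul _ aux_min_meas,
              lintegral_indicator hS1meas]
    have hcoef : ENNReal.ofReal (3 * (e * ‖z‖) ^ 2)
        ≤ ENNReal.ofReal (3 * ‖z‖ ^ 2) * ENNReal.ofReal e := by
      rw [← ENNReal.ofReal_mul (by positivity)]
      apply ENNReal.ofReal_le_ofReal
      nlinarith [norm_nonneg z, sq_nonneg (‖z‖ * e)]
    calc ENNReal.ofReal ‖T1 + T2 + T3‖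
        ≤ ENNReal.ofReal (‖T1 + T2‖ + ‖T3‖) := ENNReal.ofReal_le_ofReal (norm_add_le _ _)
      _ ≤ ENNReal.ofReal ‖T1 + T2‖ + ENNReal.ofReal ‖T3‖ := ENNReal.ofReal_add_le
      _ ≤ ENNReal.ofReal (K12 * e)
          + (ENNReal.ofReal (3 * (e * ‖z‖) ^ 2) * M₂ + H s) := by
          refine add_le_add (ENNReal.ofReal_le_ofReal h12) (step3.trans step4)
      _ ≤ ENNReal.ofReal K12 * ENNReal.ofReal e
          + (ENNReal.ofReal (3 * ‖z‖ ^ 2) * ENNReal.ofReal e * M₂ + H s) := by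
          refine add_le_add ?_ (add_le_add (mul_le_mul_left hcoef M₂) le_rfl)
          rw [← ENNReal.ofReal_mul (by positivity)]
      _ = A * ENNReal.ofReal e + H s := by rw [hA]; ring
  -- finiteness of the three pieces
  have hE1 : ∫⁻ s in Set.Ici (0 : ℝ), ENNReal.ofReal (Real.exp (-c * s)) < ⊤ := by
    have hi : IntegrableOn (fun s : ℝ => Real.exp (-c * s)) (Set.Ici 0) :=
      Iff.mpr integrableOn_Ici_iff_integrableOn_Ioi (exp_neg_integrableOn_Ioi 0 hc)
    have h2 := hi.hasFiniteIntegral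
    rwa [hasFiniteIntegral_iff_ofReal
      (Eventually.of_forall fun s => (Real.exp_pos _).le)] at h2
  have hAne : A ≠ ⊤ := by
    rw [hA]
    exact (ENNReal.add_lt_top.mpr ⟨ENNReal.ofReal_lt_top,
      ENNReal.mul_lt_top ENNReal.ofReal_lt_top hν2⟩).ne
  have hHfin : ∫⁻ s in Set.Ici (0 : ℝ), H s < ⊤ := by
    haveI : IsFiniteMeasure (ν.restrict S1) := ⟨by rwa [Measure.restrict_apply_univ]⟩
    have hum : AEMeasurable (Function.uncurry fun (s : ℝ) (x : EuclideanSpace ℝ (Fin d)) =>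
        ENNReal.ofReal (min 2 (2 * ‖z‖ * ‖x‖ * Real.exp (-c * s))))
        ((volume.restrict (Set.Ici (0:ℝ))).prod (ν.restrict S1)) := by
      apply Continuous.aemeasurable
      show Continuous fun p : ℝ × EuclideanSpace ℝ (Fin d) =>
        ENNReal.ofReal (min 2 (2 * ‖z‖ * ‖p.2‖ * Real.exp (-c * p.1)))
      exact ENNReal.continuous_ofReal.comp (continuous_const.min
        ((continuous_const.mul (continuous_norm.comp continuous_snd)).mul
          (Real.continuous_exp.comp (continuous_const.mul continuous_fst))))
    have hswap := lintegral_lintegral_swap hum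
    calc ∫⁻ s in Set.Ici (0 : ℝ), H s
        = ∫⁻ x in S1, (∫⁻ s in Set.Ici (0 : ℝ),
            ENNReal.ofReal (min 2 (2 * ‖z‖ * ‖x‖ * Real.exp (-c * s)))) ∂ν := by
          rw [hH]
          exact hswap
      _ ≤ ∫⁻ x in S1, ENNReal.ofReal
            ((2 * max 0 (Real.log (2 * ‖z‖ * ‖x‖)) + 1) / c) ∂ν :=
          lintegral_mono fun x => aux_calculus hc (by positivity)
      _ ≤ ∫⁻ x in S1, ENNReal.ofReal
            ((2 * (max 0 (Real.log (2 * ‖z‖)) + Real.log ‖x‖) + 1) / c) ∂ν := by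
          refine setLIntegral_mono' hS1meas fun x hx => ?_
          apply ENNReal.ofReal_le_ofReal
          have hl := aux_log (t := 2 * ‖z‖) (by positivity) hx.out
          gcongr
      _ < ⊤ := aux_nu ν hν2 hνlog hc _ (le_max_left _ _)
  rw [hasFiniteIntegral_iff_norm]
  calc ∫⁻ s in Set.Ici (0 : ℝ),
        ENNReal.ofReal ‖levyExponent Q γ ν (Real.exp (-c * s) • z)‖
      ≤ ∫⁻ s in Set.Ici (0 : ℝ), (A * ENNReal.ofReal (Real.exp (-c * s)) + H s) :=
        setLIntegral_mono' measurableSet_Ici hpt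
    _ = A * (∫⁻ s in Set.Ici (0 : ℝ), ENNReal.ofReal (Real.exp (-c * s))) +
        ∫⁻ s in Set.Ici (0 : ℝ), H s := by
        have hme : Measurable fun s : ℝ => ENNReal.ofReal (Real.exp (-c * s)) :=
          ((measurable_id.const_mul (-c)).exp).ennreal_ofReal
        rw [lintegral_add_left (hme.const_mul A), lintegral_const_mul A hme]
    _ < ⊤ := ENNReal.add_lt_top.mpr
        ⟨ENNReal.mul_lt_top hAne.lt_top hE1, hHfin⟩

end Aux

/-- Under the logarithmic moment condition on the Lévy measure, the function
`s ↦ ψ(e^{−cs} z)` is Lebesgue integrable on `[0,∞)` for every `z`, where `ψ`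
is the Lévy–Khinchine exponent of the triplet `(Q, ν, γ)` and `c > 0`. -/
theorem levyExponent_integrableOn_of_log_moment {d : ℕ}
    (Q : Matrix (Fin d) (Fin d) ℝ) (hQsymm : Q.IsSymm) (hQpos : Q.PosSemidef)
    (γ : EuclideanSpace ℝ (Fin d))
    (ν : Measure (EuclideanSpace ℝ (Fin d)))
    (hν0 : ν {0} = 0)
    (hν2 : ∫⁻ x, ENNReal.ofReal (min (‖x‖ ^ 2) 1) ∂ν < ⊤)
    (hνlog : ∫⁻ x in {x : EuclideanSpace ℝ (Fin d) | 2 < ‖x‖},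
      ENNReal.ofReal (Real.log ‖x‖) ∂ν < ⊤)
    (c : ℝ) (hc : 0 < c) (z : EuclideanSpace ℝ (Fin d)) :
    IntegrableOn (fun s : ℝ => levyExponent Q γ ν (Real.exp (-c * s) • z))
      (Set.Ici 0) :=
  main_thm Q hQsymm hQpos γ ν hν0 hν2 hνlog c hc z
end

section
/- Let ν be a measure on ℝ^d with ν({0}) = 0, ∫ min(|x|²,1) ν(dx) < ∞, and ∫_{|x|>2} log|x| ν(dx) < ∞, and let c > 0. Define ν_∞ on Borel sets B ⊆ ℝ^d by ν_∞(B) := (1/c) ∫_{ℝ^d} ∫_0^∞ 1_B(e^{−s} y) ds ν(dy). Then ν_∞ is a Lévy measure: ν_∞({0}) = 0 and ∫_{ℝ^d} min(|x|²,1) ν_∞(dx) < ∞. -/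
open MeasureTheory Filter Topology

/-- If `ν` is a Lévy measure on `ℝ^d` with finite logarithmic moment at infinity and
`c > 0`, then the measure `ν_∞(B) = (1/c) ∫_{ℝ^d} ∫_0^∞ 1_B(e^{−s} y) ds ν(dy)` is
again a Lévy measure: `ν_∞({0}) = 0` and `∫ min(|x|²,1) ν_∞(dx) < ∞`. -/
theorem nuInfty_is_levy_measure {d : ℕ}
    (ν : Measure (EuclideanSpace ℝ (Fin d)))
    (hν0 : ν {0} = 0)
    (hν2 : ∫⁻ x, ENNReal.ofReal (min (‖x‖ ^ 2) 1) ∂ν < ⊤)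
    (hνlog : ∫⁻ x in {x : EuclideanSpace ℝ (Fin d) | 2 < ‖x‖},
      ENNReal.ofReal (Real.log ‖x‖) ∂ν < ⊤)
    (c : ℝ) (hc : 0 < c)
    (νinf : Measure (EuclideanSpace ℝ (Fin d)))
    (hdef : ∀ B : Set (EuclideanSpace ℝ (Fin d)), MeasurableSet B →
      νinf B = ENNReal.ofReal (1 / c) *
        ∫⁻ y, (∫⁻ s in Set.Ici (0 : ℝ),
          Set.indicator B (fun _ => (1 : ENNReal)) (Real.exp (-s) • y)) ∂ν) :
    νinf {0} = 0 ∧ ∫⁻ x, ENNReal.ofReal (min (‖x‖ ^ 2) 1) ∂νinf < ⊤ := by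
  classical
  set E := EuclideanSpace ℝ (Fin d)
  set μ0 : Measure ℝ := (volume : Measure ℝ).restrict (Set.Ici 0) with hμ0def
  set φ : E × ℝ → E := fun p => Real.exp (-p.2) • p.1 with hφdef
  have hφm : Measurable φ :=
    (Real.measurable_exp.comp measurable_snd.neg).smul measurable_fst
  -- the inner integral is the `μ0`-measure of a preimage
  have hinner : ∀ (B : Set E), MeasurableSet B → ∀ y : E,
      (∫⁻ s in Set.Ici (0 : ℝ),
        Set.indicator B (fun _ => (1 : ENNReal)) (Real.exp (-s) • y)) =
      μ0 ((fun s : ℝ => Real.exp (-s) • y) ⁻¹' B) := by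
    intro B hB y
    have hm : Measurable (fun s : ℝ => Real.exp (-s) • y) :=
      (Real.measurable_exp.comp measurable_neg).smul_const y
    calc (∫⁻ s in Set.Ici (0 : ℝ),
        Set.indicator B (fun _ => (1 : ENNReal)) (Real.exp (-s) • y))
        = ∫⁻ s, Set.indicator ((fun s : ℝ => Real.exp (-s) • y) ⁻¹' B)
            (fun _ => (1 : ENNReal)) s ∂μ0 := by
          refine lintegral_congr fun s => ?_
          by_cases h : Real.exp (-s) • y ∈ B <;>
            simp [Set.indicator_apply, h]
      _ = μ0 ((fun s : ℝ => Real.exp (-s) • y) ⁻¹' B) :=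
          lintegral_indicator_one (hm hB)
  -- Part 1 : νinf {0} = 0
  have part1 : νinf {0} = 0 := by
    rw [hdef {0} (measurableSet_singleton 0)]
    have hzero : (∫⁻ y, (∫⁻ s in Set.Ici (0 : ℝ),
        Set.indicator ({0} : Set E) (fun _ => (1 : ENNReal)) (Real.exp (-s) • y)) ∂ν) = 0 := by
      have hae : ∀ᵐ y ∂ν, y ≠ (0 : E) := by
        rw [ae_iff]
        simpa using hν0
      rw [← lintegral_zero (μ := ν)]
      refine lintegral_congr_ae ?_
      filter_upwards [hae] with y hy
      rw [hinner {0} (measurableSet_singleton 0) y]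
      have : ((fun s : ℝ => Real.exp (-s) • y) ⁻¹' ({0} : Set E)) = ∅ := by
        ext s
        simp only [Set.mem_preimage, Set.mem_singleton_iff, Set.mem_empty_iff_false,
          iff_false, smul_eq_zero, not_or]
        exact ⟨(Real.exp_pos _).ne', hy⟩
      rw [this, measure_empty]
    rw [hzero, mul_zero]
  refine ⟨part1, ?_⟩
  -- rewrite νinf as a scaled pushforward of a product measure
  set f : E → ENNReal := fun x => ENNReal.ofReal (min (‖x‖ ^ 2) 1) with hfdef
  have hfm : Measurable f :=
    ((measurable_norm.pow_const 2).min measurable_const).ennreal_ofReal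
  have key : νinf = ENNReal.ofReal (1 / c) • (ν.prod μ0).map φ := by
    ext B hB
    rw [hdef B hB, Measure.smul_apply, smul_eq_mul,
      Measure.map_apply hφm hB, Measure.prod_apply (hφm hB)]
    congr 1
    refine lintegral_congr fun y => ?_
    rw [hinner B hB y]
    rfl
  have h1 : (∫⁻ x, f x ∂νinf) = ENNReal.ofReal (1 / c) *
      ∫⁻ y, (∫⁻ s in Set.Ici (0 : ℝ), f (Real.exp (-s) • y)) ∂ν := by
    rw [key, lintegral_smul_measure, smul_eq_mul, lintegral_map hfm hφm,
      lintegral_prod (fun p => f (φ p)) (hfm.comp hφm).aemeasurable]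
  -- the main estimate on the inner integral
  have keybound : ∀ y : E, (∫⁻ s in Set.Ici (0 : ℝ), f (Real.exp (-s) • y)) ≤
      ENNReal.ofReal (min (‖y‖ ^ 2) 1) * ENNReal.ofReal (max (Real.log ‖y‖) 0) +
        ENNReal.ofReal (min (‖y‖ ^ 2) 1) := by
    intro y
    set L : ℝ := max (Real.log ‖y‖) 0 with hLdef
    have hL0 : (0 : ℝ) ≤ L := le_max_right _ _
    set m : ℝ := min (‖y‖ ^ 2) 1 with hmdef
    have hm0 : 0 ≤ m := le_min (sq_nonneg _) zero_le_one
    have hnorm : ∀ s : ℝ, ‖Real.exp (-s) • y‖ = Real.exp (-s) * ‖y‖ := by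
      intro s
      rw [norm_smul, Real.norm_eq_abs, abs_of_pos (Real.exp_pos _)]
    -- split the integration domain at L
    have hsplit : (∫⁻ s in Set.Ici (0 : ℝ), f (Real.exp (-s) • y)) ≤
        (∫⁻ s in Set.Ico (0 : ℝ) L, f (Real.exp (-s) • y)) +
        ∫⁻ s in Set.Ici L, f (Real.exp (-s) • y) := by
      rw [← Set.Ico_union_Ici_eq_Ici hL0]
      exact lintegral_union_le _ _ _
    have hA : (∫⁻ s in Set.Ico (0 : ℝ) L, f (Real.exp (-s) • y)) ≤
        ENNReal.ofReal m * ENNReal.ofReal L := by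
      have hb : ∀ s ∈ Set.Ico (0 : ℝ) L, f (Real.exp (-s) • y) ≤ ENNReal.ofReal m := by
        intro s hs
        have hL : 0 < L := lt_of_le_of_lt hs.1 hs.2
        have hlog : 0 < Real.log ‖y‖ := by
          by_contra h
          push_neg at h
          have : L = 0 := by rw [hLdef, max_eq_right h]
          exact absurd this (ne_of_gt hL)
        have h1y : 1 < ‖y‖ := by
          rcases lt_or_ge 1 ‖y‖ with h | h
          · exact h
          · exfalso
            exact absurd (Real.log_nonpos (norm_nonneg _) h) (not_le.mpr hlog)
        have hm1 : m = 1 := min_eq_right (one_le_pow₀ h1y.le)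
        rw [hm1]
        exact ENNReal.ofReal_le_ofReal (min_le_right _ _)
      calc (∫⁻ s in Set.Ico (0 : ℝ) L, f (Real.exp (-s) • y)) ≤
            ∫⁻ _ in Set.Ico (0 : ℝ) L, ENNReal.ofReal m := setLIntegral_mono measurable_const hb
        _ = ENNReal.ofReal m * volume (Set.Ico (0 : ℝ) L) := setLIntegral_const _ _
        _ = ENNReal.ofReal m * ENNReal.ofReal L := by
            rw [Real.volume_Ico, sub_zero]
    have hB : (∫⁻ s in Set.Ici L, f (Real.exp (-s) • y)) ≤ ENNReal.ofReal m := by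
      have hpoint : ∀ s ∈ Set.Ici L, f (Real.exp (-s) • y) ≤
          ENNReal.ofReal m * ENNReal.ofReal (Real.exp (L - s)) := by
        intro s hs
        have hsL : L ≤ s := hs
        rw [← ENNReal.ofReal_mul hm0]
        refine ENNReal.ofReal_le_ofReal ?_
        rw [hnorm s]
        rcases le_or_gt ‖y‖ 1 with h1 | h1
        · have hLz : L = 0 := max_eq_right (Real.log_nonpos (norm_nonneg _) h1)
          have hmy : m = ‖y‖ ^ 2 := min_eq_left (by nlinarith [norm_nonneg y])
          have hs0 : 0 ≤ s := hLz ▸ hsL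
          have he1 : Real.exp (-s) ≤ 1 := Real.exp_le_one_iff.mpr (by linarith)
          have he0 : 0 < Real.exp (-s) := Real.exp_pos _
          have hLs : Real.exp (L - s) = Real.exp (-s) := by rw [hLz, zero_sub]
          rw [hmy, hLs]
          calc min ((Real.exp (-s) * ‖y‖) ^ 2) 1 ≤ (Real.exp (-s) * ‖y‖) ^ 2 :=
                min_le_left _ _
            _ ≤ ‖y‖ ^ 2 * Real.exp (-s) := by nlinarith [norm_nonneg y, sq_nonneg ‖y‖]
        · have hy0 : 0 < ‖y‖ := lt_trans one_pos h1
          have hLlog : L = Real.log ‖y‖ :=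
            max_eq_left (Real.log_nonneg h1.le)
          have hm1 : m = 1 := min_eq_right (one_le_pow₀ h1.le)
          have hexpL : Real.exp L = ‖y‖ := by rw [hLlog, Real.exp_log hy0]
          have hkey : Real.exp (-s) * ‖y‖ = Real.exp (L - s) := by
            rw [← hexpL, ← Real.exp_add]
            ring_nf
          have hle1 : Real.exp (L - s) ≤ 1 := Real.exp_le_one_iff.mpr (by linarith)
          have hpos : 0 < Real.exp (L - s) := Real.exp_pos _
          rw [hm1, hkey, one_mul]
          calc min (Real.exp (L - s) ^ 2) 1 ≤ Real.exp (L - s) ^ 2 := min_le_left _ _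
            _ ≤ Real.exp (L - s) := by nlinarith
      have hmeas : Measurable fun s : ℝ =>
          ENNReal.ofReal m * ENNReal.ofReal (Real.exp (L - s)) :=
        ((Real.measurable_exp.comp (measurable_const.sub measurable_id)).ennreal_ofReal).const_mul _
      have hexpint : (∫⁻ s in Set.Ici L, ENNReal.ofReal (Real.exp (L - s))) = 1 := by
        rw [← restrict_Ioi_eq_restrict_Ici]
        have hint : IntegrableOn (fun s : ℝ => Real.exp (L - s)) (Set.Ioi L) := by
          have : (fun s : ℝ => Real.exp (L - s)) =
              fun s : ℝ => Real.exp L * Real.exp (-s) := by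
            funext s
            rw [← Real.exp_add]
            ring_nf
          rw [this]
          have h2 : IntegrableOn (fun s : ℝ => Real.exp (-s)) (Set.Ioi L) := by
            simpa using exp_neg_integrableOn_Ioi L one_pos
          exact h2.const_mul _
        rw [← ofReal_integral_eq_lintegral_ofReal hint
          (ae_of_all _ fun s => (Real.exp_pos _).le)]
        have : (∫ s in Set.Ioi L, Real.exp (L - s)) = 1 := by
          have heq : (∫ s in Set.Ioi L, Real.exp (L - s)) =
              ∫ s in Set.Ioi L, Real.exp L * Real.exp (-s) := by
            refine setIntegral_congr_fun measurableSet_Ioi fun s _ => ?_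
            rw [← Real.exp_add]
            ring_nf
          rw [heq, MeasureTheory.integral_const_mul, integral_exp_neg_Ioi,
            ← Real.exp_add, add_neg_cancel, Real.exp_zero]
        rw [this, ENNReal.ofReal_one]
      calc (∫⁻ s in Set.Ici L, f (Real.exp (-s) • y)) ≤
            ∫⁻ s in Set.Ici L, ENNReal.ofReal m * ENNReal.ofReal (Real.exp (L - s)) :=
              setLIntegral_mono hmeas hpoint
        _ = ENNReal.ofReal m * ∫⁻ s in Set.Ici L, ENNReal.ofReal (Real.exp (L - s)) :=
              lintegral_const_mul' _ _ ENNReal.ofReal_ne_top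
        _ = ENNReal.ofReal m := by rw [hexpint, mul_one]
    calc (∫⁻ s in Set.Ici (0 : ℝ), f (Real.exp (-s) • y)) ≤
          (∫⁻ s in Set.Ico (0 : ℝ) L, f (Real.exp (-s) • y)) +
            ∫⁻ s in Set.Ici L, f (Real.exp (-s) • y) := hsplit
      _ ≤ ENNReal.ofReal m * ENNReal.ofReal L + ENNReal.ofReal m := add_le_add hA hB
  -- the product term is controlled by `min(‖y‖²,1)` and the log tail
  have hS : MeasurableSet {x : E | 2 < ‖x‖} :=
    measurableSet_lt measurable_const measurable_norm
  have bound2 : ∀ y : E,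
      ENNReal.ofReal (min (‖y‖ ^ 2) 1) * ENNReal.ofReal (max (Real.log ‖y‖) 0) ≤
      ENNReal.ofReal (min (‖y‖ ^ 2) 1) +
        Set.indicator {x : E | 2 < ‖x‖} (fun x => ENNReal.ofReal (Real.log ‖x‖)) y := by
    intro y
    rcases le_or_gt ‖y‖ 1 with h1 | h1
    · have : max (Real.log ‖y‖) 0 = 0 := max_eq_right (Real.log_nonpos (norm_nonneg _) h1)
      rw [this, ENNReal.ofReal_zero, mul_zero]
      exact zero_le
    · have hm1 : min (‖y‖ ^ 2) 1 = 1 := min_eq_right (one_le_pow₀ h1.le)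
      have hlogpos : max (Real.log ‖y‖) 0 = Real.log ‖y‖ :=
        max_eq_left (Real.log_nonneg h1.le)
      rw [hm1, hlogpos, ENNReal.ofReal_one, one_mul]
      rcases le_or_gt ‖y‖ 2 with h2 | h2
      · have hind : Set.indicator {x : E | 2 < ‖x‖}
            (fun x => ENNReal.ofReal (Real.log ‖x‖)) y = 0 := by
          apply Set.indicator_of_notMem
          simpa using not_lt.mpr h2
        rw [hind, add_zero]
        have hlog1 : Real.log ‖y‖ ≤ 1 := by
          calc Real.log ‖y‖ ≤ Real.log 2 := Real.log_le_log (lt_trans one_pos h1) h2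
            _ ≤ 1 := by linarith [Real.log_two_lt_d9]
        calc ENNReal.ofReal (Real.log ‖y‖) ≤ ENNReal.ofReal 1 :=
              ENNReal.ofReal_le_ofReal hlog1
          _ = 1 := ENNReal.ofReal_one
      · have hind : Set.indicator {x : E | 2 < ‖x‖}
            (fun x => ENNReal.ofReal (Real.log ‖x‖)) y = ENNReal.ofReal (Real.log ‖y‖) :=
          Set.indicator_of_mem (show y ∈ {x : E | 2 < ‖x‖} from h2) _
        rw [hind]
        exact le_add_self
  -- put everything together
  have hmain : (∫⁻ y, (∫⁻ s in Set.Ici (0 : ℝ), f (Real.exp (-s) • y)) ∂ν) < ⊤ := by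
    have hmeas1 : Measurable fun y : E => ENNReal.ofReal (min (‖y‖ ^ 2) 1) := hfm
    have hmeas2 : Measurable fun y : E =>
        Set.indicator {x : E | 2 < ‖x‖} (fun x => ENNReal.ofReal (Real.log ‖x‖)) y :=
      ((Real.measurable_log.comp measurable_norm).ennreal_ofReal).indicator hS
    have step1 : (∫⁻ y, (∫⁻ s in Set.Ici (0 : ℝ), f (Real.exp (-s) • y)) ∂ν) ≤
        ∫⁻ y, (ENNReal.ofReal (min (‖y‖ ^ 2) 1) +
          Set.indicator {x : E | 2 < ‖x‖} (fun x => ENNReal.ofReal (Real.log ‖x‖)) y) +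
          ENNReal.ofReal (min (‖y‖ ^ 2) 1) ∂ν := by
      refine lintegral_mono fun y => ?_
      exact le_trans (keybound y) (add_le_add_left (bound2 y) _)
    have step2 : (∫⁻ y, (ENNReal.ofReal (min (‖y‖ ^ 2) 1) +
          Set.indicator {x : E | 2 < ‖x‖} (fun x => ENNReal.ofReal (Real.log ‖x‖)) y) +
          ENNReal.ofReal (min (‖y‖ ^ 2) 1) ∂ν) =
        ((∫⁻ y, ENNReal.ofReal (min (‖y‖ ^ 2) 1) ∂ν) +
          ∫⁻ y, Set.indicator {x : E | 2 < ‖x‖}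
            (fun x => ENNReal.ofReal (Real.log ‖x‖)) y ∂ν) +
          ∫⁻ y, ENNReal.ofReal (min (‖y‖ ^ 2) 1) ∂ν := by
      rw [lintegral_add_right _ hmeas1, lintegral_add_left hmeas1]
    have hindint : (∫⁻ y, Set.indicator {x : E | 2 < ‖x‖}
        (fun x => ENNReal.ofReal (Real.log ‖x‖)) y ∂ν) =
        ∫⁻ x in {x : E | 2 < ‖x‖}, ENNReal.ofReal (Real.log ‖x‖) ∂ν :=
      lintegral_indicator hS _
    refine lt_of_le_of_lt (le_trans step1 (le_of_eq step2)) ?_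
    rw [hindint]
    exact ENNReal.add_lt_top.mpr ⟨ENNReal.add_lt_top.mpr ⟨hν2, hνlog⟩, hν2⟩
  rw [h1]
  exact ENNReal.mul_lt_top ENNReal.ofReal_lt_top hmain
end
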